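/- Any two triangulations of a convex polygon are connected by a sequence of flips: given triangulations T and T' of a convex d-gon, there is a finite sequence of flips (replacing the diagonal of a quadrilateral formed by two adjacent triangles with the other diagonal) transforming T into T'. -/

import Mathlib

/-- A pair `(a, b)` of vertices of a convex `d`-gon (vertices `0, …, d-1` in
cyclic order) is a diagonal if `a < b`, they are not consecutive, and they are
not the pair `{0, d-1}` of cyclically adjacent vertices. -/
def IsDiag (d : ℕ) (p : Fin d × Fin d) : Prop :=
  (p.1 : ℕ) + 1 < (p.2 : ℕ) ∧ ¬((p.1 : ℕ) = 0 ∧ (p.2 : ℕ) = d - 1)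

/-- Two chords of a convex polygon cross iff their endpoints interlace. -/
def Crosses {d : ℕ} (p q : Fin d × Fin d) : Prop :=
  (p.1 < q.1 ∧ q.1 < p.2 ∧ p.2 < q.2) ∨ (q.1 < p.1 ∧ p.1 < q.2 ∧ q.2 < p.2)

/-- A triangulation of a convex `d`-gon: a maximal set of pairwise noncrossing
diagonals. -/
def IsTriangulation (d : ℕ) (T : Finset (Fin d × Fin d)) : Prop :=
  (∀ p ∈ T, IsDiag d p) ∧
  (∀ p ∈ T, ∀ q ∈ T, ¬ Crosses p q) ∧
  (∀ q, IsDiag d q → q ∉ T → ∃ p ∈ T, Crosses p q)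

/-- A flip: replace a single diagonal `p` of a triangulation `T` by another
diagonal `q` (the other diagonal of the quadrilateral containing `p`), so that
the result is again a triangulation. -/
def FlipRel (d : ℕ) (T T' : Finset (Fin d × Fin d)) : Prop :=
  IsTriangulation d T ∧ IsTriangulation d T' ∧
  ∃ p q, p ∈ T ∧ p ∉ T' ∧ q ∈ T' ∧ q ∉ T ∧ T' = insert q (T.erase p)

lemma crosses_iff {d : ℕ} (x y u v : Fin d) :
    Crosses (x, y) (u, v) ↔
      ((x : ℕ) < u ∧ (u : ℕ) < y ∧ (y : ℕ) < v) ∨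
      ((u : ℕ) < x ∧ (x : ℕ) < v ∧ (v : ℕ) < y) :=
  Iff.rfl

lemma pair_eq_iff {d : ℕ} (x y u v : Fin d) :
    (x, y) = (u, v) ↔ (x : ℕ) = u ∧ (y : ℕ) = v := by
  simp [Prod.ext_iff, Fin.ext_iff]

lemma isDiag_iff {d : ℕ} (x y : Fin d) :
    IsDiag d (x, y) ↔ ((x : ℕ) + 1 < (y : ℕ) ∧ ¬((x : ℕ) = 0 ∧ (y : ℕ) = d - 1)) :=
  Iff.rfl

/-- The key flip step: if a triangulation has a diagonal not incident to
vertex `0`, we can flip one such diagonal to a diagonal through `0`. -/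
lemma flip_step (d : ℕ) (T : Finset (Fin d × Fin d)) (hT : IsTriangulation d T)
    (hS : ∃ p ∈ T, (p.1 : ℕ) ≠ 0) :
    ∃ T', FlipRel d T T' ∧
      (T'.filter fun p => (p.1 : ℕ) ≠ 0).card <
        (T.filter fun p => (p.1 : ℕ) ≠ 0).card := by
  obtain ⟨hdiag, hnc, hmaxl⟩ := hT
  set S := T.filter (fun p => (p.1 : ℕ) ≠ 0) with hSdef
  have hSne : S.Nonempty := by
    obtain ⟨p, hp, hp0⟩ := hS
    exact ⟨p, Finset.mem_filter.2 ⟨hp, hp0⟩⟩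
  obtain ⟨p₀, hp₀S, hmax₀⟩ := S.exists_max_image (fun p => (p.2 : ℕ) - (p.1 : ℕ)) hSne
  obtain ⟨a, b⟩ := p₀
  have habT : (a, b) ∈ T := (Finset.mem_filter.1 hp₀S).1
  have ha0 : (a : ℕ) ≠ 0 := (Finset.mem_filter.1 hp₀S).2
  have hD : (a : ℕ) + 1 < (b : ℕ) := (hdiag _ habT).1
  have hbd : (b : ℕ) < d := b.isLt
  have dpos : 0 < d := a.pos
  set z : Fin d := ⟨0, dpos⟩ with hzdef
  have hz : (z : ℕ) = 0 := rfl
  have hmax : ∀ x y : Fin d, (x, y) ∈ T → (x : ℕ) ≠ 0 →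
      (y : ℕ) - (x : ℕ) ≤ (b : ℕ) - (a : ℕ) := by
    intro x y hxy hx0
    exact hmax₀ _ (Finset.mem_filter.2 ⟨hxy, hx0⟩)
  -- Edge from 0 to a
  have hA : (a : ℕ) = 1 ∨ (z, a) ∈ T := by
    by_contra h
    push_neg at h
    obtain ⟨ha1, hza⟩ := h
    have hdza : IsDiag d (z, a) := by
      rw [isDiag_iff]; omega
    obtain ⟨p, hpT, hpc⟩ := hmaxl _ hdza hza
    obtain ⟨x, y⟩ := p
    rw [crosses_iff] at hpc
    rw [hz] at hpc
    have hx0 : (x : ℕ) ≠ 0 := by omega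
    have h1 := hnc _ habT _ hpT
    have h2 := hnc _ hpT _ habT
    rw [crosses_iff] at h1 h2
    have h3 := hmax x y hpT hx0
    omega
  -- Edge from 0 to b
  have hB : (b : ℕ) = d - 1 ∨ (z, b) ∈ T := by
    by_contra h
    push_neg at h
    obtain ⟨hb1, hzb⟩ := h
    have hdzb : IsDiag d (z, b) := by
      rw [isDiag_iff]; omega
    obtain ⟨p, hpT, hpc⟩ := hmaxl _ hdzb hzb
    obtain ⟨x, y⟩ := p
    rw [crosses_iff] at hpc
    rw [hz] at hpc
    have hx0 : (x : ℕ) ≠ 0 := by omega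
    have h1 := hnc _ habT _ hpT
    have h2 := hnc _ hpT _ habT
    rw [crosses_iff] at h1 h2
    have h3 := hmax x y hpT hx0
    have := y.isLt
    omega
  -- inner apex m
  have hcand : ∃ m : Fin d, (a : ℕ) < (m : ℕ) ∧ (m : ℕ) < (b : ℕ) ∧
      ((m : ℕ) = (a : ℕ) + 1 ∨ (a, m) ∈ T) ∧
      ((b : ℕ) = (m : ℕ) + 1 ∨ (m, b) ∈ T) := by
    classical
    set C : Finset (Fin d) := Finset.univ.filter
      (fun c => (a : ℕ) < (c : ℕ) ∧ (c : ℕ) < (b : ℕ) ∧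
        ((c : ℕ) = (a : ℕ) + 1 ∨ (a, c) ∈ T)) with hC
    have hCne : C.Nonempty := by
      refine ⟨⟨(a : ℕ) + 1, by omega⟩, ?_⟩
      rw [hC, Finset.mem_filter]
      exact ⟨Finset.mem_univ _, Nat.lt_succ_self _, hD, Or.inl rfl⟩
    obtain ⟨m, hmC, hmmax⟩ := C.exists_max_image (fun c => (c : ℕ)) hCne
    rw [hC, Finset.mem_filter] at hmC
    obtain ⟨-, ham, hmb, hAm⟩ := hmC
    refine ⟨m, ham, hmb, hAm, ?_⟩
    by_contra hmb'
    push_neg at hmb'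
    obtain ⟨hb1, hmbT⟩ := hmb'
    have hdmb : IsDiag d (m, b) := by rw [isDiag_iff]; omega
    obtain ⟨p, hpT, hpc⟩ := hmaxl _ hdmb hmbT
    obtain ⟨x, y⟩ := p
    rw [crosses_iff] at hpc
    rcases hpc with ⟨h1, h2, h3⟩ | ⟨h1, h2, h3⟩
    · rcases lt_trichotomy (x : ℕ) (a : ℕ) with hxa | hxa | hxa
      · have := hnc _ habT _ hpT
        rw [crosses_iff] at this
        omega
      · have hxea : x = a := Fin.ext hxa
        subst hxea
        have hyC : y ∈ C := by
          rw [hC, Finset.mem_filter]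
          exact ⟨Finset.mem_univ _, by omega, by omega, Or.inr hpT⟩
        have := hmmax y hyC
        omega
      · rcases hAm with h | h
        · omega
        · have := hnc _ h _ hpT
          rw [crosses_iff] at this
          omega
    · have := hnc _ habT _ hpT
      rw [crosses_iff] at this
      omega
  obtain ⟨m, ham, hmb, hAm, hMb⟩ := hcand
  -- the new triangulation
  set T2 : Finset (Fin d × Fin d) := insert (z, m) (T.erase (a, b)) with hT2
  have hzmT : (z, m) ∉ T := by
    intro h
    have := hnc _ habT _ h
    rw [crosses_iff, hz] at this
    omega
  -- key nocrossing fact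
  have key : ∀ x y : Fin d, (x, y) ∈ T → (x, y) ≠ (a, b) →
      ¬((0 : ℕ) < (x : ℕ) ∧ (x : ℕ) < (m : ℕ) ∧ (m : ℕ) < (y : ℕ)) := by
    rintro x y hxyT hne ⟨h1, h2, h3⟩
    have hyd : (y : ℕ) < d := y.isLt
    rcases lt_trichotomy (x : ℕ) (a : ℕ) with hxa | hxa | hxa
    · rcases hA with h | h
      · omega
      · have := hnc _ h _ hxyT
        rw [crosses_iff, hz] at this
        omega
    · have hxea : x = a := Fin.ext hxa
      subst hxea
      rcases lt_trichotomy (y : ℕ) (b : ℕ) with hyb | hyb | hyb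
      · rcases hMb with h | h
        · omega
        · have := hnc _ h _ hxyT
          rw [crosses_iff] at this
          omega
      · exact hne ((pair_eq_iff _ _ _ _).2 ⟨rfl, hyb⟩)
      · rcases hB with h | h
        · omega
        · have := hnc _ h _ hxyT
          rw [crosses_iff, hz] at this
          omega
    · rcases hAm with h | h
      · omega
      · have := hnc _ h _ hxyT
        rw [crosses_iff] at this
        omega
  -- T2 is a triangulation
  have hT2diag : ∀ p ∈ T2, IsDiag d p := by
    intro p hp
    rw [hT2, Finset.mem_insert] at hp
    rcases hp with h | h
    · subst h
      rw [isDiag_iff]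
      omega
    · exact hdiag _ (Finset.mem_of_mem_erase h)
  have hT2nc : ∀ p ∈ T2, ∀ q ∈ T2, ¬ Crosses p q := by
    intro p hp q hq
    rw [hT2, Finset.mem_insert] at hp hq
    rcases hp with hp | hp <;> rcases hq with hq | hq
    · subst hp; subst hq
      rw [crosses_iff]; omega
    · subst hp
      obtain ⟨x, y⟩ := q
      rw [Finset.mem_erase] at hq
      intro hc
      rw [crosses_iff, hz] at hc
      exact key x y hq.2 hq.1 (by omega)
    · subst hq
      obtain ⟨x, y⟩ := p
      rw [Finset.mem_erase] at hp
      intro hc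
      rw [crosses_iff, hz] at hc
      exact key x y hp.2 hp.1 (by omega)
    · exact hnc _ (Finset.mem_of_mem_erase hp) _ (Finset.mem_of_mem_erase hq)
  have hT2max : ∀ q, IsDiag d q → q ∉ T2 → ∃ p ∈ T2, Crosses p q := by
    intro q hqd hq2
    obtain ⟨x, y⟩ := q
    rw [hT2, Finset.mem_insert, Finset.mem_erase] at hq2
    push_neg at hq2
    obtain ⟨hne_zm, hq2'⟩ := hq2
    have hyd : (y : ℕ) < d := y.isLt
    by_cases hqab : (x, y) = (a, b)
    · refine ⟨(z, m), Finset.mem_insert_self _ _, ?_⟩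
      rw [hqab, crosses_iff, hz]
      omega
    · have hqT : (x, y) ∉ T := hq2' hqab
      obtain ⟨p, hpT, hpc⟩ := hmaxl _ hqd hqT
      by_cases hpab : p = (a, b)
      · subst hpab
        rw [crosses_iff] at hpc
        rcases hpc with ⟨h1, h2, h3⟩ | ⟨h1, h2, h3⟩
        · -- a < x < b < y
          rcases lt_trichotomy (x : ℕ) (m : ℕ) with h | h | h
          · refine ⟨(z, m), Finset.mem_insert_self _ _, ?_⟩
            rw [crosses_iff, hz]
            omega
          · -- x = m : use (z, b)
            rcases hB with hb | hb
            · omega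
            · refine ⟨(z, b), Finset.mem_insert_of_mem (Finset.mem_erase.2
                ⟨fun he => by
                  rw [pair_eq_iff, hz] at he
                  omega, hb⟩), ?_⟩
              rw [crosses_iff, hz]
              omega
          · rcases hMb with hb | hb
            · omega
            · refine ⟨(m, b), Finset.mem_insert_of_mem (Finset.mem_erase.2
                ⟨fun he => by
                  rw [pair_eq_iff] at he
                  omega, hb⟩), ?_⟩
              rw [crosses_iff]
              omega
        · -- x < a < y < b
          rcases lt_trichotomy (y : ℕ) (m : ℕ) with h | h | h
          · rcases hAm with hm | hm
            · omega
            · refine ⟨(a, m), Finset.mem_insert_of_mem (Finset.mem_erase.2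
                ⟨fun he => by
                  rw [pair_eq_iff] at he
                  omega, hm⟩), ?_⟩
              rw [crosses_iff]
              omega
          · -- y = m
            by_cases hx0 : (x : ℕ) = 0
            · exact absurd ((pair_eq_iff _ _ _ _).2 ⟨by rw [hz]; omega, h⟩) hne_zm
            · rcases hA with ha | ha
              · omega
              · refine ⟨(z, a), Finset.mem_insert_of_mem (Finset.mem_erase.2
                  ⟨fun he => by
                    rw [pair_eq_iff, hz] at he
                    omega, ha⟩), ?_⟩
                rw [crosses_iff, hz]
                omega
          · -- y > m
            by_cases hx0 : (x : ℕ) = 0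
            · rcases hMb with hb | hb
              · omega
              · refine ⟨(m, b), Finset.mem_insert_of_mem (Finset.mem_erase.2
                  ⟨fun he => by
                    rw [pair_eq_iff] at he
                    omega, hb⟩), ?_⟩
                rw [crosses_iff]
                omega
            · refine ⟨(z, m), Finset.mem_insert_self _ _, ?_⟩
              rw [crosses_iff, hz]
              omega
      · exact ⟨p, Finset.mem_insert_of_mem (Finset.mem_erase.2 ⟨hpab, hpT⟩), hpc⟩
  have hT2tri : IsTriangulation d T2 := ⟨hT2diag, hT2nc, hT2max⟩
  refine ⟨T2, ⟨⟨hdiag, hnc, hmaxl⟩, hT2tri, (a, b), (z, m), habT, ?_,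
    hT2 ▸ Finset.mem_insert_self _ _, hzmT, hT2⟩, ?_⟩
  · rw [hT2, Finset.mem_insert]
    rintro (h | h)
    · rw [pair_eq_iff, hz] at h
      omega
    · exact (Finset.mem_erase.1 h).1 rfl
  · have hfe : T2.filter (fun p => (p.1 : ℕ) ≠ 0) = S.erase (a, b) := by
      ext p
      simp only [hT2, hSdef, Finset.mem_filter, Finset.mem_insert, Finset.mem_erase]
      constructor
      · rintro ⟨h | ⟨hne, hmem⟩, h0⟩
        · exfalso
          apply h0
          rw [h]
        · exact ⟨hne, hmem, h0⟩
      · rintro ⟨hne, hmem, h0⟩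
        exact ⟨Or.inr ⟨hne, hmem⟩, h0⟩
    rw [hfe]
    exact Finset.card_erase_lt_of_mem hp₀S

/-- `FlipRel` is symmetric. -/
lemma flipRel_symm {d : ℕ} : Symmetric (FlipRel d) := by
  rintro T T' ⟨hT, hT', p, q, hpT, hpT', hqT', hqT, heq⟩
  refine ⟨hT', hT, q, p, hqT', hqT, hpT, hpT', ?_⟩
  subst heq
  rw [Finset.erase_insert (by simp [Finset.mem_erase, hqT]), Finset.insert_erase hpT]

/-- Triangulations all of whose diagonals pass through `0` are unique. -/
lemma base_subset {d : ℕ} {T T' : Finset (Fin d × Fin d)}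
    (hT : IsTriangulation d T) (hT' : IsTriangulation d T')
    (h0 : ∀ p ∈ T, (p.1 : ℕ) = 0) (h0' : ∀ p ∈ T', (p.1 : ℕ) = 0) : T ⊆ T' := by
  intro p hp
  by_contra hp'
  obtain ⟨q, hqT', hqc⟩ := hT'.2.2 p (hT.1 p hp) hp'
  obtain ⟨x, y⟩ := q
  obtain ⟨u, v⟩ := p
  rw [crosses_iff] at hqc
  have hx := h0' _ hqT'
  have hu := h0 _ hp
  simp only at hx hu
  omega

/-- Every triangulation flips to one whose diagonals all pass through `0`. -/
lemma reach_base (d : ℕ) : ∀ n (T : Finset (Fin d × Fin d)),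
    (T.filter fun p => (p.1 : ℕ) ≠ 0).card = n → IsTriangulation d T →
    ∃ T₀, IsTriangulation d T₀ ∧ (∀ p ∈ T₀, (p.1 : ℕ) = 0) ∧
      Relation.ReflTransGen (FlipRel d) T T₀ := by
  intro n
  induction n using Nat.strong_induction_on with
  | _ n ih =>
    intro T hcard hT
    by_cases hS : ∃ p ∈ T, (p.1 : ℕ) ≠ 0
    · obtain ⟨T', hflip, hlt⟩ := flip_step d T hT hS
      obtain ⟨T₀, h1, h2, h3⟩ := ih _ (hcard ▸ hlt) T' rfl hflip.2.1
      exact ⟨T₀, h1, h2, Relation.ReflTransGen.head hflip h3⟩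
    · push_neg at hS
      exact ⟨T, hT, hS, Relation.ReflTransGen.refl⟩

/-- Any two triangulations of a convex `d`-gon are connected by a finite
sequence of flips. -/
theorem triangulations_flip_connected (d : ℕ)
    (T T' : Finset (Fin d × Fin d))
    (hT : IsTriangulation d T) (hT' : IsTriangulation d T') :
    Relation.ReflTransGen (FlipRel d) T T' := by
  obtain ⟨T₀, h1, h2, h3⟩ := reach_base d _ T rfl hT
  obtain ⟨T₀', h1', h2', h3'⟩ := reach_base d _ T' rfl hT'
  have heq : T₀ = T₀' :=
    Finset.Subset.antisymm (base_subset h1 h1' h2 h2') (base_subset h1' h1 h2' h2)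
  exact h3.trans (heq ▸ ((@Relation.ReflTransGen.stdSymm _ (FlipRel d) ⟨flipRel_symm⟩).symm _ _ h3'))
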